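/- Let P ⊆ ℝ^n be a 0/1 polytope of dimension d, let x^0 be a vertex of P, and let c ∈ ℝ^n. Define f : ℝ^n → ℕ (with respect to x^0) by f(u) = max({k ∈ {1,…,n} : u(k) ≠ x^0(k)} ∪ {0}). Consider any finite sequence of vertices x^0, x^1, …, x^k of P such that for each i < k, x^{i+1} maximizes ⟨c,·⟩ among those c-improving neighbors u of x^i whose f-value is minimal (over all c-improving neighbors of x^i), and such that the final vertex x^k has no c-improving neighbor. Then k ≤ d. -/

import Mathlib

open Finset

attribute [local instance] Classical.propDecidable

noncomputable section

/-- Standard dot product on `Fin n → ℝ`. -/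
def dotR {n : ℕ} (c x : Fin n → ℝ) : ℝ := ∑ i, c i * x i

/-- A polytope: the convex hull of a finite nonempty set of points. -/
def IsPolytope {n : ℕ} (P : Set (Fin n → ℝ)) : Prop :=
  ∃ V : Finset (Fin n → ℝ), V.Nonempty ∧ P = convexHull ℝ (V : Set (Fin n → ℝ))

/-- A 0/1 polytope: the convex hull of a finite nonempty subset of `{0,1}^n`. -/
def IsPolytope01 {n : ℕ} (P : Set (Fin n → ℝ)) : Prop :=
  ∃ V : Finset (Fin n → ℝ), V.Nonempty ∧ (∀ w ∈ V, ∀ i, w i = 0 ∨ w i = 1) ∧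
    P = convexHull ℝ (V : Set (Fin n → ℝ))

/-- A vertex of `P` is an extreme point of `P`. -/
def IsVertex {n : ℕ} (P : Set (Fin n → ℝ)) (x : Fin n → ℝ) : Prop :=
  x ∈ P.extremePoints ℝ

/-- Two distinct vertices are adjacent when the segment between them is a face. -/
def Adjacent {n : ℕ} (P : Set (Fin n → ℝ)) (x y : Fin n → ℝ) : Prop :=
  IsVertex P x ∧ IsVertex P y ∧ x ≠ y ∧ IsExtreme ℝ P (segment ℝ x y)

/-- `u` is a `w`-improving neighbor of `x`. -/
def ImpNbr {n : ℕ} (P : Set (Fin n → ℝ)) (w x u : Fin n → ℝ) : Prop :=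
  Adjacent P x u ∧ dotR w x < dotR w u

/-- A Shadow-rule path on `P` with auxiliary vector `v` and objective `c`:
vertices `x 0, …, x k`, each step a `v`-improving neighbor maximizing the slope
`⟨c, u − xᵢ⟩ / ⟨v, u − xᵢ⟩` over all `v`-improving neighbors, and the last vertex
has no `v`-improving neighbor. -/
def ShadowPath {n : ℕ} (P : Set (Fin n → ℝ)) (c v : Fin n → ℝ) (k : ℕ)
    (x : ℕ → Fin n → ℝ) : Prop :=
  (∀ i ≤ k, IsVertex P (x i)) ∧
  (∀ i < k, ImpNbr P v (x i) (x (i + 1)) ∧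
    ∀ u, ImpNbr P v (x i) u →
      dotR c (u - x i) / dotR v (u - x i)
        ≤ dotR c (x (i + 1) - x i) / dotR v (x (i + 1) - x i)) ∧
  (∀ u, ¬ ImpNbr P v (x k) u)

/-- `f(u)` relative to `x0`: the largest index (in `1, …, n` labelling) where `u`
differs from `x0`, and `0` if there is none. -/
def lastIdx {n : ℕ} (x0 u : Fin n → ℝ) : ℕ :=
  (Finset.univ.filter fun j : Fin n => u j ≠ x0 j).sup fun j => (j : ℕ) + 1

/-- `f(w)` for a 0/1 vector: the largest index (in `1, …, n` labelling) with
`w j = 1`, and `0` for the zero vector. -/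
def lastOne {n : ℕ} (w : Fin n → ℝ) : ℕ :=
  (Finset.univ.filter fun j : Fin n => w j = 1).sup fun j => (j : ℕ) + 1

namespace OrdAux

variable {n : ℕ}


lemma dotR_add_right (g a b : Fin n → ℝ) : dotR g (a + b) = dotR g a + dotR g b := by
  simp [dotR, mul_add, Finset.sum_add_distrib]

lemma dotR_sub_right (g a b : Fin n → ℝ) : dotR g (a - b) = dotR g a - dotR g b := by
  simp [dotR, mul_sub, Finset.sum_sub_distrib]

lemma dotR_smul_right (g : Fin n → ℝ) (t : ℝ) (a : Fin n → ℝ) :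
    dotR g (t • a) = t * dotR g a := by
  simp only [dotR, Pi.smul_apply, smul_eq_mul, Finset.mul_sum]
  exact Finset.sum_congr rfl fun i _ => by ring

lemma dotR_neg_left (g a : Fin n → ℝ) : dotR (-g) a = - dotR g a := by
  simp [dotR]

lemma dotR_sub_left (g h a : Fin n → ℝ) : dotR (g - h) a = dotR g a - dotR h a := by
  simp [dotR, sub_mul, Finset.sum_sub_distrib]

lemma dotR_smul_left (t : ℝ) (g a : Fin n → ℝ) : dotR (t • g) a = t * dotR g a := by
  simp only [dotR, Pi.smul_apply, smul_eq_mul, Finset.mul_sum]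
  exact Finset.sum_congr rfl fun i _ => by ring

lemma dotR_single (j : Fin n) (a : Fin n → ℝ) : dotR (Pi.single j 1) a = a j := by
  simp [dotR]
  rw [Finset.sum_eq_single j]
  · simp
  · intro b _ hb; simp [Pi.single_apply, hb]
  · simp

lemma isLinearMap_dotR (g : Fin n → ℝ) : IsLinearMap ℝ (dotR g) :=
  ⟨fun a b => dotR_add_right g a b, fun t a => by rw [dotR_smul_right]; rfl⟩

lemma dotR_self_pos {v : Fin n → ℝ} (hv : v ≠ 0) : 0 < dotR v v := by
  have h1 : ∀ i ∈ Finset.univ (α := Fin n), 0 ≤ v i * v i := fun i _ => mul_self_nonneg _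
  obtain ⟨j, hj⟩ : ∃ j, v j ≠ 0 := by
    by_contra h; push_neg at h; exact hv (funext h)
  have : 0 < v j * v j := by
    rcases lt_or_gt_of_ne hj with h | h
    · exact mul_pos_of_neg_of_neg h h
    · exact mul_pos h h
  exact Finset.sum_pos' h1 ⟨j, Finset.mem_univ j, this⟩

/-- Max principle: a linear functional on a convex hull is bounded by its max on the set. -/
lemma hull_dot_le {W : Finset (Fin n → ℝ)} {g : Fin n → ℝ} {M : ℝ}
    (hW : ∀ w ∈ W, dotR g w ≤ M) {u : Fin n → ℝ}
    (hu : u ∈ convexHull ℝ (W : Set (Fin n → ℝ))) : dotR g u ≤ M := by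
  have : convexHull ℝ (W : Set (Fin n → ℝ)) ⊆ {v | dotR g v ≤ M} :=
    convexHull_min (fun w hw => hW w hw) (convex_halfSpace_le (isLinearMap_dotR g) M)
  exact this hu


lemma dotR_zero_right (g : Fin n → ℝ) : dotR g 0 = 0 := by simp [dotR]

lemma dotR_sum_right {ι : Type*} (g : Fin n → ℝ) (s : Finset ι) (f : ι → Fin n → ℝ) :
    dotR g (∑ i ∈ s, f i) = ∑ i ∈ s, dotR g (f i) := by
  classical
  induction s using Finset.induction_on with
  | empty => simp [dotR_zero_right]
  | insert _ _ hnot ih =>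
    rw [Finset.sum_insert hnot, Finset.sum_insert hnot, dotR_add_right, ih]

/-- The set where a linear functional attains its max over a hull equals the hull of maximizers. -/
lemma face_hull_eq (W : Finset (Fin n → ℝ)) (g : Fin n → ℝ) (M : ℝ)
    (hW : ∀ w ∈ W, dotR g w ≤ M) :
    {u | u ∈ convexHull ℝ (W : Set (Fin n → ℝ)) ∧ dotR g u = M}
      = convexHull ℝ ((W.filter fun w => dotR g w = M : Finset (Fin n → ℝ)) :
          Set (Fin n → ℝ)) := by
  apply Set.Subset.antisymm
  · rintro u ⟨hu, hgu⟩
    rw [Finset.convexHull_eq] at hu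
    obtain ⟨w, hw0, hw1, hcm⟩ := hu
    rw [Finset.centerMass_eq_of_sum_1 _ _ hw1] at hcm
    simp only [id_eq] at hcm
    have hdot : dotR g u = ∑ y ∈ W, w y * dotR g y := by
      rw [← hcm, dotR_sum_right]
      exact Finset.sum_congr rfl fun y _ => dotR_smul_right g (w y) y
    have hzero : ∑ y ∈ W, w y * (M - dotR g y) = 0 := by
      have : ∑ y ∈ W, w y * (M - dotR g y)
          = (∑ y ∈ W, w y) * M - ∑ y ∈ W, w y * dotR g y := by
        rw [Finset.sum_mul, ← Finset.sum_sub_distrib]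
        exact Finset.sum_congr rfl fun y _ => by ring
      rw [this, hw1, one_mul, ← hdot, hgu, sub_self]
    have hkey : ∀ y ∈ W, w y * (M - dotR g y) = 0 := by
      rw [Finset.sum_eq_zero_iff_of_nonneg ?_] at hzero
      · exact hzero
      · intro y hy
        exact mul_nonneg (hw0 y hy) (sub_nonneg.2 (hW y hy))
    have hw0' : ∀ y ∈ W, y ∉ W.filter (fun w => dotR g w = M) → w y = 0 := by
      intro y hy hny
      by_contra hwy
      rcases mul_eq_zero.1 (hkey y hy) with h | h
      · exact hwy h
      · exact hny (Finset.mem_filter.2 ⟨hy, by linarith [sub_eq_zero.1 h]⟩)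
    have hsub : (W.filter fun w => dotR g w = M : Finset (Fin n → ℝ)) ⊆ W :=
      Finset.filter_subset _ _
    have hsum' : ∑ y ∈ W.filter (fun w => dotR g w = M), w y = 1 := by
      rw [Finset.sum_subset hsub hw0']; exact hw1
    have hu' : ∑ y ∈ W.filter (fun w => dotR g w = M), w y • y = u := by
      rw [Finset.sum_subset hsub (fun y hy hny => by rw [hw0' y hy hny, zero_smul])]
      exact hcm
    have hmem := Finset.centerMass_id_mem_convexHull (W.filter (fun w => dotR g w = M))
      (w := w) (fun y hy => hw0 y (hsub hy)) (by rw [hsum']; norm_num)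
    rw [Finset.centerMass_eq_of_sum_1 _ _ hsum'] at hmem
    simp only [id_eq] at hmem
    rwa [hu'] at hmem
  · intro u hu
    have hsub : (W.filter fun w => dotR g w = M : Finset (Fin n → ℝ)) ⊆ W :=
      Finset.filter_subset _ _
    refine ⟨convexHull_mono (by exact_mod_cast hsub) hu, le_antisymm ?_ ?_⟩
    · exact hull_dot_le (fun w hw => le_of_eq (Finset.mem_filter.1 hw).2) hu
    · have h2 : dotR (-g) u ≤ -M :=
        hull_dot_le (fun w hw => by rw [dotR_neg_left]; linarith [(Finset.mem_filter.1 hw).2]) hu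
      rw [dotR_neg_left] at h2
      linarith

lemma isExtreme_face (W : Finset (Fin n → ℝ)) (g : Fin n → ℝ) (M : ℝ)
    (hW : ∀ w ∈ W, dotR g w ≤ M) :
    IsExtreme ℝ (convexHull ℝ (W : Set (Fin n → ℝ)))
      {u | u ∈ convexHull ℝ (W : Set (Fin n → ℝ)) ∧ dotR g u = M} := by
  constructor
  · exact fun u hu => hu.1
  · rintro x1 hx1 x2 hx2 z ⟨hz, hgz⟩ hseg
    obtain ⟨a, b, ha, hb, hab, habz⟩ := hseg
    have h1 : dotR g x1 ≤ M := hull_dot_le (fun w hw => hW w hw) hx1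
    have h2 : dotR g x2 ≤ M := hull_dot_le (fun w hw => hW w hw) hx2
    have hzval : a * dotR g x1 + b * dotR g x2 = M := by
      rw [← hgz, ← habz, dotR_add_right, dotR_smul_right, dotR_smul_right]
    have habM : a * M + b * M = M := by rw [← add_mul, hab, one_mul]
    have ha1 : a * M ≤ a * dotR g x1 := by
      linarith [mul_le_mul_of_nonneg_left h2 hb.le]
    have hb1 : b * M ≤ b * dotR g x2 := by
      linarith [mul_le_mul_of_nonneg_left h1 ha.le]
    have he1 : dotR g x1 = M := le_antisymm h1 (le_of_mul_le_mul_left ha1 ha)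
    have he2 : dotR g x2 = M := le_antisymm h2 (le_of_mul_le_mul_left hb1 hb)
    exact ⟨hx1, he1⟩


/-- An extreme point of the hull of `W` is not in the hull of `W` minus itself. -/
lemma not_mem_hull_erase {W : Finset (Fin n → ℝ)} {x : Fin n → ℝ}
    (hx : x ∈ (convexHull ℝ (W : Set (Fin n → ℝ))).extremePoints ℝ) :
    x ∉ convexHull ℝ ((W.erase x : Finset (Fin n → ℝ)) : Set (Fin n → ℝ)) := by
  intro hmem
  have hsub : convexHull ℝ ((W.erase x : Finset (Fin n → ℝ)) : Set (Fin n → ℝ))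
      ⊆ convexHull ℝ (W : Set (Fin n → ℝ)) :=
    convexHull_mono (by exact_mod_cast Finset.erase_subset x W)
  have hx' : x ∈ (convexHull ℝ ((W.erase x : Finset (Fin n → ℝ)) :
      Set (Fin n → ℝ))).extremePoints ℝ :=
    inter_extremePoints_subset_extremePoints_of_subset hsub ⟨hmem, hx⟩
  have h2 := extremePoints_convexHull_subset hx'
  have h3 : x ∈ W.erase x := by exact_mod_cast h2
  exact (Finset.mem_erase.1 h3).1 rfl

/-- Separation of a vertex from the other generators. -/
lemma exists_sep (W : Finset (Fin n → ℝ)) (x : Fin n → ℝ)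
    (hx : x ∈ (convexHull ℝ (W : Set (Fin n → ℝ))).extremePoints ℝ) :
    ∃ g : Fin n → ℝ, ∀ w ∈ W, w ≠ x → 0 < dotR g w - dotR g x := by
  by_cases hE : W.erase x = ∅
  · exact ⟨0, fun w hw hwx => absurd (Finset.mem_erase.2 ⟨hwx, hw⟩) (by simp [hE])⟩
  · set K := convexHull ℝ ((W.erase x : Finset (Fin n → ℝ)) : Set (Fin n → ℝ)) with hK
    have hconv : Convex ℝ K := convex_convexHull ℝ _
    have hclosed : IsClosed K :=
      ((W.erase x).finite_toSet.isCompact_convexHull ℝ).isClosed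
    have hnot : x ∉ K := not_mem_hull_erase hx
    obtain ⟨f, u, hfu, hfx⟩ := geometric_hahn_banach_point_closed hconv hclosed hnot
    set g : Fin n → ℝ := fun i => f (Pi.single i 1) with hg
    have hfg : ∀ v : Fin n → ℝ, f v = dotR g v := by
      intro v
      have hv : v = ∑ i : Fin n, v i • (Pi.single i 1 : Fin n → ℝ) := by
        ext j
        rw [Finset.sum_apply]
        rw [Finset.sum_eq_single j]
        · simp
        · intro b _ hb; simp [Pi.single_apply, hb.symm]
        · simp
      calc f v = f (∑ i : Fin n, v i • (Pi.single i 1 : Fin n → ℝ)) := by rw [← hv]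
        _ = ∑ i : Fin n, v i • f (Pi.single i 1 : Fin n → ℝ) := by
            rw [map_sum]; exact Finset.sum_congr rfl fun i _ => by rw [map_smul]
        _ = dotR g v := by simp [dotR, hg, mul_comm]
    refine ⟨g, fun w hw hwx => ?_⟩
    have hwK : (w : Fin n → ℝ) ∈ K :=
      subset_convexHull ℝ _ (by exact_mod_cast Finset.mem_erase.2 ⟨hwx, hw⟩)
    have := hfx w hwK
    have h2 := hfu
    rw [hfg] at this h2
    linarith

/-- A point uniquely maximizing a linear functional is an extreme point. -/
lemma extreme_of_unique_max (Q : Set (Fin n → ℝ)) (g z : Fin n → ℝ) (hz : z ∈ Q)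
    (hmax : ∀ u ∈ Q, dotR g u ≤ dotR g z)
    (huniq : ∀ u ∈ Q, dotR g u = dotR g z → u = z) : z ∈ Q.extremePoints ℝ := by
  refine mem_extremePoints.2 ⟨hz, fun x1 hx1 x2 hx2 hseg => ?_⟩
  obtain ⟨a, b, ha, hb, hab, habz⟩ := hseg
  have h1 : dotR g x1 ≤ dotR g z := hmax x1 hx1
  have h2 : dotR g x2 ≤ dotR g z := hmax x2 hx2
  have hzval : a * dotR g x1 + b * dotR g x2 = dotR g z := by
    rw [← habz, dotR_add_right, dotR_smul_right, dotR_smul_right]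
  have habM : a * dotR g z + b * dotR g z = dotR g z := by rw [← add_mul, hab, one_mul]
  have he1 : dotR g x1 = dotR g z := by
    have := mul_le_mul_of_nonneg_left h2 hb.le
    have h3 : a * dotR g z ≤ a * dotR g x1 := by linarith
    exact le_antisymm h1 (le_of_mul_le_mul_left h3 ha)
  have he2 : dotR g x2 = dotR g z := by
    have := mul_le_mul_of_nonneg_left h1 ha.le
    have h3 : b * dotR g z ≤ b * dotR g x2 := by linarith
    exact le_antisymm h2 (le_of_mul_le_mul_left h3 hb)
  exact ⟨huniq x1 hx1 he1, huniq x2 hx2 he2⟩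

/-- Adjacency in an extreme subset lifts to adjacency in the ambient set. -/
lemma adjacent_lift {Q F : Set (Fin n → ℝ)} (hQF : IsExtreme ℝ Q F)
    {x z : Fin n → ℝ} (h : Adjacent F x z) : Adjacent Q x z := by
  obtain ⟨hvx, hvz, hne, hseg⟩ := h
  exact ⟨hQF.extremePoints_subset_extremePoints hvx,
    hQF.extremePoints_subset_extremePoints hvz, hne, hQF.trans hseg⟩


/-- Every vertex of a polytope with at least two points has a neighbor. -/
lemma exists_adjacent : ∀ (N : ℕ) (W : Finset (Fin n → ℝ)), W.card ≤ N →
    ∀ x : Fin n → ℝ, x ∈ (convexHull ℝ (W : Set (Fin n → ℝ))).extremePoints ℝ →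
    ∀ y ∈ convexHull ℝ (W : Set (Fin n → ℝ)), y ≠ x →
    ∃ z, Adjacent (convexHull ℝ (W : Set (Fin n → ℝ))) x z := by
  intro N
  induction N with
  | zero =>
    intro W hcard x hx y hy hne
    rw [Finset.card_eq_zero.1 (Nat.le_zero.1 hcard)] at hx
    simp at hx
  | succ N IH =>
    intro W hcard x hx y hy hyx
    have hxW : x ∈ W := by exact_mod_cast extremePoints_convexHull_subset hx
    have hS : (W.erase x).Nonempty := by
      rcases Finset.eq_empty_or_nonempty (W.erase x) with hE | hne
      · exfalso
        have : W = {x} := by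
          apply Finset.eq_singleton_iff_unique_mem.2
          exact ⟨hxW, fun w hw => by
            by_contra hwx
            exact (Finset.notMem_empty w) (hE ▸ Finset.mem_erase.2 ⟨hwx, hw⟩)⟩
        rw [this] at hy
        simp only [Finset.coe_singleton, convexHull_singleton, Set.mem_singleton_iff] at hy
        exact hyx hy
      · exact hne
    obtain ⟨g, hgsep⟩ := exists_sep W x hx
    have hpos : ∀ w ∈ W.erase x, 0 < dotR g w - dotR g x := fun w hw =>
      hgsep w (Finset.mem_erase.1 hw).2 (Finset.mem_erase.1 hw).1
    by_cases hall : ∀ w1 ∈ W.erase x, ∀ w2 ∈ W.erase x,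
        (dotR g w1 - dotR g x)⁻¹ • (w1 - x) = (dotR g w2 - dotR g x)⁻¹ • (w2 - x)
    · -- degenerate case : all points on a ray from x; the hull is a segment
      obtain ⟨w0, hw0⟩ := id hS
      set v : Fin n → ℝ := (dotR g w0 - dotR g x)⁻¹ • (w0 - x) with hv
      have hwv : ∀ w ∈ W.erase x, w - x = (dotR g w - dotR g x) • v := by
        intro w hw
        have := hall w hw w0 hw0
        rw [← hv] at this
        calc w - x = (dotR g w - dotR g x) • ((dotR g w - dotR g x)⁻¹ • (w - x)) := by
              rw [smul_smul, mul_inv_cancel₀ (ne_of_gt (hpos w hw)), one_smul]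
          _ = (dotR g w - dotR g x) • v := by rw [this]
      have hvne : v ≠ 0 := by
        intro h0
        have := hwv w0 hw0
        rw [h0, smul_zero, sub_eq_zero] at this
        exact (Finset.mem_erase.1 hw0).1 this
      obtain ⟨z, hzS, hzmax⟩ := Finset.exists_max_image (W.erase x)
        (fun w => dotR g w) hS
      have hzpos := hpos z hzS
      -- every w ∈ W is in segment x z
      have hWseg : ∀ w ∈ W, w ∈ segment ℝ x z := by
        intro w hw
        by_cases hwx : w = x
        · rw [hwx]; exact left_mem_segment ℝ x z
        · have hwS := Finset.mem_erase.2 ⟨hwx, hw⟩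
          set t : ℝ := (dotR g w - dotR g x) / (dotR g z - dotR g x) with ht
          have htpos : 0 < t := div_pos (hpos w hwS) hzpos
          have htle : t ≤ 1 := by
            rw [ht, div_le_one hzpos]
            linarith [hzmax w hwS]
          refine ⟨1 - t, t, by linarith, htpos.le, by ring, ?_⟩
          have hz' : z = (dotR g z - dotR g x) • v + x := by
            rw [← hwv z hzS]; abel
          have hw' : w = (dotR g w - dotR g x) • v + x := by
            rw [← hwv w hwS]; abel
          have hts : t * (dotR g z - dotR g x) = dotR g w - dotR g x :=
            div_mul_cancel₀ _ (ne_of_gt hzpos)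
          rw [hz', hw', ← hts]
          module
      have hhull : convexHull ℝ (W : Set (Fin n → ℝ)) ⊆ segment ℝ x z :=
        convexHull_min (fun w hw => hWseg w (by exact_mod_cast hw)) (convex_segment x z)
      have hseg_eq : segment ℝ x z = convexHull ℝ (W : Set (Fin n → ℝ)) := by
        apply Set.Subset.antisymm
        · rw [← convexHull_pair]
          apply convexHull_mono
          intro u hu
          rcases hu with h | h
          · exact h ▸ (by exact_mod_cast hxW)
          · exact h ▸ (by exact_mod_cast (Finset.mem_erase.1 hzS).2)
        · exact hhull
      have hxz : x ≠ z := fun h => (Finset.mem_erase.1 hzS).1 h.symm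
      have hgxz : dotR g x < dotR g z := by linarith
      -- z is a vertex
      have hzvert : z ∈ (convexHull ℝ (W : Set (Fin n → ℝ))).extremePoints ℝ := by
        apply extreme_of_unique_max _ g
        · exact subset_convexHull ℝ _ (by exact_mod_cast (Finset.mem_erase.1 hzS).2)
        · intro u hu
          obtain ⟨a, b, ha, hb, hab, hu'⟩ := hhull hu
          rw [← hu', dotR_add_right, dotR_smul_right, dotR_smul_right]
          have habG : a * dotR g z + b * dotR g z = dotR g z := by
            rw [← add_mul, hab, one_mul]
          linarith [mul_le_mul_of_nonneg_left hgxz.le ha]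
        · intro u hu hequ
          obtain ⟨a, b, ha, hb, hab, hu'⟩ := hhull hu
          rw [← hu', dotR_add_right, dotR_smul_right, dotR_smul_right] at hequ
          have habG : a * dotR g z + b * dotR g z = dotR g z := by
            rw [← add_mul, hab, one_mul]
          have ha0 : a = 0 := by
            by_contra h
            have hapos : 0 < a := lt_of_le_of_ne ha (Ne.symm h)
            have := mul_lt_mul_of_pos_left hgxz hapos
            linarith
          have hb1 : b = 1 := by linarith
          rw [← hu', ha0, hb1, zero_smul, zero_add, one_smul]
      refine ⟨z, hx, hzvert, hxz, ?_⟩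
      rw [hseg_eq]
    · -- main case
      push_neg at hall
      obtain ⟨w1, hw1, w2, hw2, hwt⟩ := hall
      set cvec : Fin n → ℝ := (dotR g w1 - dotR g x)⁻¹ • (w1 - x)
        - (dotR g w2 - dotR g x)⁻¹ • (w2 - x) with hcvec
      have hcne : cvec ≠ 0 := sub_ne_zero.2 hwt
      set r : (Fin n → ℝ) → ℝ :=
        fun w => (dotR g w - dotR g x)⁻¹ * (dotR cvec w - dotR cvec x) with hr
      have hrwt : ∀ w ∈ W.erase x,
          r w = dotR cvec ((dotR g w - dotR g x)⁻¹ • (w - x)) := by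
        intro w hw
        rw [dotR_smul_right, dotR_sub_right]
      have hr12 : r w1 ≠ r w2 := by
        rw [hrwt w1 hw1, hrwt w2 hw2]
        intro h
        have hsplit : dotR cvec cvec
            = dotR cvec ((dotR g w1 - dotR g x)⁻¹ • (w1 - x))
              - dotR cvec ((dotR g w2 - dotR g x)⁻¹ • (w2 - x)) := by
          nth_rewrite 2 [hcvec]
          rw [dotR_sub_right]
        have : dotR cvec cvec = 0 := by rw [hsplit, h, sub_self]
        exact (dotR_self_pos hcne).ne' this
      obtain ⟨wm, hwm, hmax⟩ := Finset.exists_max_image (W.erase x) r hS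
      set tstar := r wm with htstar
      set A := (W.erase x).filter (fun w => r w = tstar) with hA
      have hwl : ∃ wl ∈ W.erase x, r wl ≠ tstar := by
        by_cases h1 : r w1 = tstar
        · exact ⟨w2, hw2, by rw [← h1]; exact fun h => hr12 h.symm⟩
        · exact ⟨w1, hw1, h1⟩
      obtain ⟨wl, hwlS, hwlr⟩ := hwl
      set gψ : Fin n → ℝ := cvec - tstar • g with hgψ
      have hdψ : ∀ u, dotR gψ u = dotR cvec u - tstar * dotR g u := by
        intro u; rw [hgψ, dotR_sub_left, dotR_smul_left]
      have hDr : ∀ w ∈ W.erase x,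
          dotR cvec w - dotR cvec x = (dotR g w - dotR g x) * r w := by
        intro w hw
        rw [hr]
        rw [← mul_assoc, mul_inv_cancel₀ (ne_of_gt (hpos w hw)), one_mul]
      have hWψ : ∀ w ∈ W, dotR gψ w ≤ dotR gψ x := by
        intro w hw
        by_cases hwx : w = x
        · rw [hwx]
        · have hwS := Finset.mem_erase.2 ⟨hwx, hw⟩
          rw [hdψ w, hdψ x]
          have h1 := hDr w hwS
          have h2 : (dotR g w - dotR g x) * r w ≤ (dotR g w - dotR g x) * tstar :=
            mul_le_mul_of_nonneg_left (hmax w hwS) (hpos w hwS).le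
          nlinarith
      have hWfA : W.filter (fun w => dotR gψ w = dotR gψ x) = insert x A := by
        ext w
        simp only [Finset.mem_filter, Finset.mem_insert, hA]
        constructor
        · rintro ⟨hwW, hweq⟩
          by_cases hwx : w = x
          · exact Or.inl hwx
          · right
            have hwS := Finset.mem_erase.2 ⟨hwx, hwW⟩
            refine ⟨hwS, ?_⟩
            rw [hdψ w, hdψ x] at hweq
            have h1 := hDr w hwS
            have h3 : (dotR g w - dotR g x) * r w = (dotR g w - dotR g x) * tstar := by
              nlinarith
            exact mul_left_cancel₀ (ne_of_gt (hpos w hwS)) h3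
        · rintro (hwx | hwA)
          · rw [hwx]; exact ⟨hxW, rfl⟩
          · obtain ⟨hwS, hwr⟩ := hwA
            refine ⟨(Finset.mem_erase.1 hwS).2, ?_⟩
            rw [hdψ w, hdψ x]
            have h1 := hDr w hwS
            rw [hwr] at h1
            nlinarith
      have hface := face_hull_eq W gψ (dotR gψ x) hWψ
      rw [hWfA] at hface
      have hFex : IsExtreme ℝ (convexHull ℝ (W : Set (Fin n → ℝ)))
          (convexHull ℝ ((insert x A : Finset (Fin n → ℝ)) : Set (Fin n → ℝ))) := by
        rw [← hface]
        exact isExtreme_face W gψ (dotR gψ x) hWψ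
      have hsubW : (insert x A : Finset (Fin n → ℝ)) ⊆ W := by
        intro w hw
        rcases Finset.mem_insert.1 hw with h | h
        · exact h ▸ hxW
        · rw [hA] at h
          exact (Finset.mem_erase.1 (Finset.mem_filter.1 h).1).2
      have hxF : x ∈ (convexHull ℝ ((insert x A : Finset (Fin n → ℝ)) :
          Set (Fin n → ℝ))).extremePoints ℝ := by
        apply inter_extremePoints_subset_extremePoints_of_subset
          (convexHull_mono (by exact_mod_cast hsubW))
        exact ⟨subset_convexHull ℝ _ (by exact_mod_cast Finset.mem_insert_self x A),  hx⟩
      have hcard' : (insert x A : Finset (Fin n → ℝ)).card ≤ N := by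
        have hss : (insert x A : Finset (Fin n → ℝ)) ⊂ W := by
          refine Finset.ssubset_iff_of_subset hsubW |>.2 ?_
          refine ⟨wl, (Finset.mem_erase.1 hwlS).2, ?_⟩
          intro hmem
          rcases Finset.mem_insert.1 hmem with h | h
          · exact (Finset.mem_erase.1 hwlS).1 h
          · rw [hA] at h
            exact hwlr (Finset.mem_filter.1 h).2
        have := Finset.card_lt_card hss
        omega
      have hwmA : wm ∈ A := by rw [hA]; exact Finset.mem_filter.2 ⟨hwm, rfl⟩
      have hwmne : wm ≠ x := (Finset.mem_erase.1 hwm).1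
      obtain ⟨z, hz⟩ := IH (insert x A) hcard' x hxF wm
        (subset_convexHull ℝ _ (by exact_mod_cast Finset.mem_insert_of_mem hwmA)) hwmne
      exact ⟨z, adjacent_lift hFex hz⟩


/-- Local optimality at a vertex implies global optimality (polytope version). -/
lemma local_global (W : Finset (Fin n → ℝ)) (g x : Fin n → ℝ)
    (hx : x ∈ (convexHull ℝ (W : Set (Fin n → ℝ))).extremePoints ℝ)
    (hnb : ∀ z, Adjacent (convexHull ℝ (W : Set (Fin n → ℝ))) x z → dotR g z ≤ dotR g x) :
    ∀ y ∈ convexHull ℝ (W : Set (Fin n → ℝ)), dotR g y ≤ dotR g x := by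
  have hxW : x ∈ W := by exact_mod_cast extremePoints_convexHull_subset hx
  by_contra hcon
  push_neg at hcon
  obtain ⟨y, hy, hgy⟩ := hcon
  have hWbad : ∃ w ∈ W, dotR g x < dotR g w := by
    by_contra hno
    push_neg at hno
    exact absurd (hull_dot_le hno hy) (not_le.2 hgy)
  obtain ⟨wb, hwbW, hwbg⟩ := hWbad
  have hwbx : wb ≠ x := by intro h; rw [h] at hwbg; exact lt_irrefl _ hwbg
  have hS : (W.erase x).Nonempty := ⟨wb, Finset.mem_erase.2 ⟨hwbx, hwbW⟩⟩
  obtain ⟨g0, hgsep⟩ := exists_sep W x hx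
  have hpos : ∀ w ∈ W.erase x, 0 < dotR g0 w - dotR g0 x := fun w hw =>
    hgsep w (Finset.mem_erase.1 hw).2 (Finset.mem_erase.1 hw).1
  set r : (Fin n → ℝ) → ℝ :=
    fun w => (dotR g0 w - dotR g0 x)⁻¹ * (dotR g w - dotR g x) with hr
  obtain ⟨wm, hwm, hmax⟩ := Finset.exists_max_image (W.erase x) r hS
  set tstar := r wm with htstar
  have htpos : 0 < tstar := by
    have hwbS : wb ∈ W.erase x := Finset.mem_erase.2 ⟨hwbx, hwbW⟩
    have : 0 < r wb := mul_pos (inv_pos.2 (hpos wb hwbS)) (by linarith)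
    exact lt_of_lt_of_le this (hmax wb hwbS)
  set gψ : Fin n → ℝ := g - tstar • g0 with hgψ
  have hdψ : ∀ u, dotR gψ u = dotR g u - tstar * dotR g0 u := by
    intro u; rw [hgψ, dotR_sub_left, dotR_smul_left]
  have hDr : ∀ w ∈ W.erase x,
      dotR g w - dotR g x = (dotR g0 w - dotR g0 x) * r w := by
    intro w hw
    rw [hr, ← mul_assoc, mul_inv_cancel₀ (ne_of_gt (hpos w hw)), one_mul]
  have hWψ : ∀ w ∈ W, dotR gψ w ≤ dotR gψ x := by
    intro w hw
    by_cases hwx : w = x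
    · rw [hwx]
    · have hwS := Finset.mem_erase.2 ⟨hwx, hw⟩
      rw [hdψ w, hdψ x]
      have h1 := hDr w hwS
      have h2 : (dotR g0 w - dotR g0 x) * r w ≤ (dotR g0 w - dotR g0 x) * tstar :=
        mul_le_mul_of_nonneg_left (hmax w hwS) (hpos w hwS).le
      nlinarith
  set A := (W.erase x).filter (fun w => r w = tstar) with hA
  have hWfA : W.filter (fun w => dotR gψ w = dotR gψ x) = insert x A := by
    ext w
    simp only [Finset.mem_filter, Finset.mem_insert, hA]
    constructor
    · rintro ⟨hwW, hweq⟩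
      by_cases hwx : w = x
      · exact Or.inl hwx
      · right
        have hwS := Finset.mem_erase.2 ⟨hwx, hwW⟩
        refine ⟨hwS, ?_⟩
        rw [hdψ w, hdψ x] at hweq
        have h1 := hDr w hwS
        have h3 : (dotR g0 w - dotR g0 x) * r w = (dotR g0 w - dotR g0 x) * tstar := by
          nlinarith
        exact mul_left_cancel₀ (ne_of_gt (hpos w hwS)) h3
    · rintro (hwx | hwA)
      · rw [hwx]; exact ⟨hxW, rfl⟩
      · obtain ⟨hwS, hwr⟩ := hwA
        refine ⟨(Finset.mem_erase.1 hwS).2, ?_⟩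
        rw [hdψ w, hdψ x]
        have h1 := hDr w hwS
        rw [hwr] at h1
        nlinarith
  have hface := face_hull_eq W gψ (dotR gψ x) hWψ
  rw [hWfA] at hface
  have hFex : IsExtreme ℝ (convexHull ℝ (W : Set (Fin n → ℝ)))
      (convexHull ℝ ((insert x A : Finset (Fin n → ℝ)) : Set (Fin n → ℝ))) := by
    rw [← hface]
    exact isExtreme_face W gψ (dotR gψ x) hWψ
  have hsubW : (insert x A : Finset (Fin n → ℝ)) ⊆ W := by
    intro w hw
    rcases Finset.mem_insert.1 hw with h | h
    · exact h ▸ hxW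
    · rw [hA] at h
      exact (Finset.mem_erase.1 (Finset.mem_filter.1 h).1).2
  have hxF : x ∈ (convexHull ℝ ((insert x A : Finset (Fin n → ℝ)) :
      Set (Fin n → ℝ))).extremePoints ℝ := by
    apply inter_extremePoints_subset_extremePoints_of_subset
      (convexHull_mono (by exact_mod_cast hsubW))
    exact ⟨subset_convexHull ℝ _ (by exact_mod_cast Finset.mem_insert_self x A), hx⟩
  have hwmA : wm ∈ A := by rw [hA]; exact Finset.mem_filter.2 ⟨hwm, rfl⟩
  have hwmne : wm ≠ x := (Finset.mem_erase.1 hwm).1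
  obtain ⟨z, hz⟩ := exists_adjacent (insert x A : Finset (Fin n → ℝ)).card _ le_rfl x hxF wm
    (subset_convexHull ℝ _ (by exact_mod_cast Finset.mem_insert_of_mem hwmA)) hwmne
  have hzP := adjacent_lift hFex hz
  -- z is a member of insert x A and z ≠ x, so z ∈ A, hence dotR g z > dotR g x
  have hzA : z ∈ A := by
    have hzvert := hz.2.1
    have hzmem : z ∈ (insert x A : Finset (Fin n → ℝ)) := by
      exact_mod_cast extremePoints_convexHull_subset hzvert
    rcases Finset.mem_insert.1 hzmem with h | h
    · exact absurd h.symm hz.2.2.1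
    · exact h
  have hzS : z ∈ W.erase x := by rw [hA] at hzA; exact (Finset.mem_filter.1 hzA).1
  have hzr : r z = tstar := by rw [hA] at hzA; exact (Finset.mem_filter.1 hzA).2
  have hgz : dotR g x < dotR g z := by
    have h1 := hDr z hzS
    rw [hzr] at h1
    nlinarith [mul_pos (hpos z hzS) htpos]
  exact absurd (hnb z hzP) (not_le.2 hgz)


lemma lastIdx_le_n (x0 u : Fin n → ℝ) : lastIdx x0 u ≤ n :=
  Finset.sup_le fun j _ => j.isLt

lemma lastIdx_le_iff {x0 u : Fin n → ℝ} {m : ℕ} :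
    lastIdx x0 u ≤ m ↔ ∀ j : Fin n, u j ≠ x0 j → (j : ℕ) + 1 ≤ m := by
  rw [lastIdx, Finset.sup_le_iff]
  constructor
  · intro h j hj; exact h j (Finset.mem_filter.2 ⟨Finset.mem_univ j, hj⟩)
  · intro h j hj; exact h j (Finset.mem_filter.1 hj).2

lemma le_lastIdx {x0 u : Fin n → ℝ} {j : Fin n} (h : u j ≠ x0 j) :
    (j : ℕ) + 1 ≤ lastIdx x0 u :=
  Finset.le_sup (f := fun j : Fin n => (j : ℕ) + 1)
    (Finset.mem_filter.2 ⟨Finset.mem_univ j, h⟩)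

lemma lastIdx_self (x0 : Fin n → ℝ) : lastIdx x0 x0 = 0 := by
  have hE : (Finset.univ.filter fun j : Fin n => x0 j ≠ x0 j) = ∅ := by
    apply Finset.filter_false_of_mem; intro j _; simp
  rw [lastIdx, hE, Finset.sup_empty]
  rfl

lemma lastIdx_pos {x0 u : Fin n → ℝ} (h : u ≠ x0) : 0 < lastIdx x0 u := by
  obtain ⟨j, hj⟩ : ∃ j, u j ≠ x0 j := by
    by_contra hc; push_neg at hc; exact h (funext hc)
  exact lt_of_lt_of_le (Nat.succ_pos _) (le_lastIdx hj)

lemma lastIdx_attained {x0 u : Fin n → ℝ} (h : 0 < lastIdx x0 u) :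
    ∃ j : Fin n, u j ≠ x0 j ∧ (j : ℕ) + 1 = lastIdx x0 u := by
  have hne : (Finset.univ.filter fun j : Fin n => u j ≠ x0 j).Nonempty := by
    rcases Finset.eq_empty_or_nonempty (Finset.univ.filter fun j : Fin n => u j ≠ x0 j)
      with hE | hne
    · exfalso; rw [lastIdx, hE] at h; simp at h
    · exact hne
  obtain ⟨j, hjmem, hj⟩ := Finset.exists_mem_eq_sup _ hne (fun j : Fin n => (j : ℕ) + 1)
  exact ⟨j, (Finset.mem_filter.1 hjmem).2, hj.symm⟩

/-- The generators of the coordinate face `x_j = x0_j` for all `j ≥ m` (1-indexed `> m`). -/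
def Vm (V : Finset (Fin n → ℝ)) (x0 : Fin n → ℝ) (m : ℕ) : Finset (Fin n → ℝ) :=
  V.filter fun w => ∀ j : Fin n, m < (j : ℕ) + 1 → w j = x0 j

lemma mem_Vm_iff {V : Finset (Fin n → ℝ)} {x0 w : Fin n → ℝ} {m : ℕ} :
    w ∈ Vm V x0 m ↔ w ∈ V ∧ ∀ j : Fin n, m < (j : ℕ) + 1 → w j = x0 j :=
  Finset.mem_filter

lemma mem_Vm_of_lastIdx {V : Finset (Fin n → ℝ)} {x0 w : Fin n → ℝ} {m : ℕ}
    (hw : w ∈ V) (h : lastIdx x0 w ≤ m) : w ∈ Vm V x0 m := by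
  refine mem_Vm_iff.2 ⟨hw, fun j hj => ?_⟩
  by_contra hne
  have := le_lastIdx hne
  omega

lemma lastIdx_le_of_mem_Vm {V : Finset (Fin n → ℝ)} {x0 w : Fin n → ℝ} {m : ℕ}
    (hw : w ∈ Vm V x0 m) : lastIdx x0 w ≤ m := by
  rw [lastIdx_le_iff]
  intro j hj
  by_contra hlt
  exact hj ((mem_Vm_iff.1 hw).2 j (by omega))

lemma Vm_of_ge {V : Finset (Fin n → ℝ)} {x0 : Fin n → ℝ} {m : ℕ} (h : n ≤ m) :
    Vm V x0 m = V := by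
  rw [Vm, Finset.filter_true_of_mem]
  intro w _ j hj
  exact absurd j.isLt (by omega)

/-- Each coordinate face hull is an extreme subset of the polytope. -/
lemma Vm_extreme (V : Finset (Fin n → ℝ)) (x0 : Fin n → ℝ)
    (h01 : ∀ w ∈ V, ∀ i, w i = 0 ∨ w i = 1) (hx0 : x0 ∈ V) (m : ℕ) :
    IsExtreme ℝ (convexHull ℝ (V : Set (Fin n → ℝ)))
      (convexHull ℝ ((Vm V x0 m : Finset (Fin n → ℝ)) : Set (Fin n → ℝ))) := by
  -- downward induction from n
  suffices H : ∀ t m', m' + t = n → IsExtreme ℝ (convexHull ℝ (V : Set (Fin n → ℝ)))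
      (convexHull ℝ ((Vm V x0 m' : Finset (Fin n → ℝ)) : Set (Fin n → ℝ))) by
    rcases le_or_gt n m with h | h
    · rw [Vm_of_ge h]
    · exact H (n - m) m (by omega)
  intro t
  induction t with
  | zero =>
    intro m' hm'
    rw [Vm_of_ge (by omega)]
  | succ t IH =>
    intro m' hm'
    have hstep := IH (m' + 1) (by omega)
    have hm'n : m' < n := by omega
    set jm : Fin n := ⟨m', hm'n⟩ with hjm
    set sig : ℝ := 2 * x0 jm - 1 with hsig
    set gj : Fin n → ℝ := sig • (Pi.single jm 1 : Fin n → ℝ) with hgj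
    have hdgj : ∀ u : Fin n → ℝ, dotR gj u = sig * u jm := by
      intro u; rw [hgj, dotR_smul_left, dotR_single]
    have hx0jm := h01 x0 hx0 jm
    have hbound : ∀ w ∈ Vm V x0 (m' + 1), dotR gj w ≤ sig * x0 jm := by
      intro w hw
      rw [hdgj]
      have hwjm := h01 w (mem_Vm_iff.1 hw).1 jm
      rcases hx0jm with h0 | h0 <;> rcases hwjm with h1 | h1 <;>
        rw [hsig, h0, h1] <;> norm_num
    have heqiff : ∀ w ∈ Vm V x0 (m' + 1), (dotR gj w = sig * x0 jm ↔ w jm = x0 jm) := by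
      intro w hw
      rw [hdgj]
      have hwjm := h01 w (mem_Vm_iff.1 hw).1 jm
      rcases hx0jm with h0 | h0 <;> rcases hwjm with h1 | h1 <;>
        rw [hsig, h0, h1] <;> norm_num
    have hfilter : (Vm V x0 (m' + 1)).filter (fun w => dotR gj w = sig * x0 jm)
        = Vm V x0 m' := by
      ext w
      rw [Finset.mem_filter, mem_Vm_iff, mem_Vm_iff]
      constructor
      · rintro ⟨⟨hwV, hcond⟩, heq⟩
        refine ⟨hwV, fun j hj => ?_⟩
        by_cases hjeq : (j : ℕ) = m'
        · have : j = jm := Fin.ext hjeq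
          rw [this]
          exact (heqiff w (mem_Vm_iff.2 ⟨hwV, hcond⟩)).1 heq
        · exact hcond j (by omega)
      · rintro ⟨hwV, hcond⟩
        have hcond' : ∀ j : Fin n, m' + 1 < (j : ℕ) + 1 → w j = x0 j :=
          fun j hj => hcond j (by omega)
        refine ⟨⟨hwV, hcond'⟩, ?_⟩
        exact (heqiff w (mem_Vm_iff.2 ⟨hwV, hcond'⟩)).2 (hcond jm (by simp [hjm]))
    have hface := face_hull_eq (Vm V x0 (m' + 1)) gj (sig * x0 jm) hbound
    rw [hfilter] at hface
    have : IsExtreme ℝ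
        (convexHull ℝ ((Vm V x0 (m' + 1) : Finset (Fin n → ℝ)) : Set (Fin n → ℝ)))
        (convexHull ℝ ((Vm V x0 m' : Finset (Fin n → ℝ)) : Set (Fin n → ℝ))) := by
      rw [← hface]
      exact isExtreme_face _ gj (sig * x0 jm) hbound
    exact hstep.trans this


end OrdAux

open OrdAux

/-- Lemma 3.9: the path that at each step moves to the `c`-maximum among the
`f`-minimal `c`-improving neighbors (with `f(u)` the largest coordinate index where
`u` differs from `x⁰`) has length at most the dimension `d` of the polytope. -/
theorem ordered_rule_path_bound {n : ℕ} (P : Set (Fin n → ℝ)) (hP : IsPolytope01 P)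
    (d : ℕ) (hd : Module.finrank ℝ (affineSpan ℝ P).direction = d)
    (c : Fin n → ℝ) (x0 : Fin n → ℝ) (hx0 : IsVertex P x0)
    (k : ℕ) (x : ℕ → Fin n → ℝ) (hstart : x 0 = x0)
    (hvert : ∀ i ≤ k, IsVertex P (x i))
    (hstep : ∀ i < k, ImpNbr P c (x i) (x (i + 1)) ∧
      (∀ u, ImpNbr P c (x i) u → lastIdx x0 (x (i + 1)) ≤ lastIdx x0 u) ∧
      (∀ u, ImpNbr P c (x i) u → lastIdx x0 u = lastIdx x0 (x (i + 1)) →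
        dotR c u ≤ dotR c (x (i + 1))))
    (hend : ∀ u, ¬ ImpNbr P c (x k) u) :
    k ≤ d := by
  obtain ⟨V, hVne, hV01, hPeq⟩ := hP
  have hx0P : x0 ∈ (convexHull ℝ (V : Set (Fin n → ℝ))).extremePoints ℝ := by
    rw [← hPeq]; exact hx0
  have hx0V : x0 ∈ V := by exact_mod_cast extremePoints_convexHull_subset hx0P
  have hmemV : ∀ y : Fin n → ℝ, IsVertex P y → y ∈ V := by
    intro y hy
    have : y ∈ (convexHull ℝ (V : Set (Fin n → ℝ))).extremePoints ℝ := by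
      rw [← hPeq]; exact hy
    exact_mod_cast extremePoints_convexHull_subset this
  have hVmEx : ∀ mm, IsExtreme ℝ P
      (convexHull ℝ ((Vm V x0 mm : Finset (Fin n → ℝ)) : Set (Fin n → ℝ))) := by
    intro mm; rw [hPeq]; exact Vm_extreme V x0 hV01 hx0V mm
  -- The key invariant: every improving neighbor has strictly larger lastIdx.
  have key : ∀ i, i ≤ k → ∀ u, ImpNbr P c (x i) u → lastIdx x0 (x i) < lastIdx x0 u := by
    intro i
    induction i with
    | zero =>
      intro _ u hu
      rw [hstart, lastIdx_self]
      apply lastIdx_pos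
      intro h
      exact hu.1.2.2.1 (by rw [hstart]; exact h.symm)
    | succ j ih =>
      intro hjk u hu
      have hjk' : j < k := by omega
      obtain ⟨hstep1, hstep2, hstep3⟩ := hstep j hjk'
      have hm : lastIdx x0 (x j) < lastIdx x0 (x (j+1)) := ih (by omega) _ hstep1
      by_contra hle
      push_neg at hle
      set m' := lastIdx x0 (x (j + 1)) with hm'def
      have hm'pos : 0 < m' := by omega
      have hm'n : m' ≤ n := lastIdx_le_n _ _
      obtain ⟨jst, hjstv⟩ : ∃ jst : Fin n, (jst : ℕ) = m' - 1 := ⟨⟨m'-1, by omega⟩, rfl⟩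
      have hjst1 : (jst : ℕ) + 1 = m' := by omega
      have hvj : IsVertex P (x j) := hvert j (by omega)
      have hvj1 : IsVertex P (x (j+1)) := hvert (j+1) (by omega)
      have hvu : IsVertex P u := hu.1.2.1
      have hvjV : x j ∈ V := hmemV _ hvj
      have hvj1V : x (j+1) ∈ V := hmemV _ hvj1
      have hvuV : u ∈ V := hmemV _ hvu
      have hxjVm1 : x j ∈ Vm V x0 (m' - 1) := mem_Vm_of_lastIdx hvjV (by omega)
      have hxjVm : x j ∈ Vm V x0 m' := mem_Vm_of_lastIdx hvjV (by omega)
      have hxj1Vm : x (j+1) ∈ Vm V x0 m' := mem_Vm_of_lastIdx hvj1V (le_of_eq hm'def.symm)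
      have huVm : u ∈ Vm V x0 m' := mem_Vm_of_lastIdx hvuV hle
      -- Step A : x j maximizes c on the (m'-1)-face
      have hxjExtB : x j ∈ (convexHull ℝ ((Vm V x0 (m'-1) : Finset (Fin n → ℝ)) :
          Set (Fin n → ℝ))).extremePoints ℝ :=
        inter_extremePoints_subset_extremePoints_of_subset (hVmEx (m'-1)).1
          ⟨subset_convexHull ℝ _ hxjVm1, hvj⟩
      have hB : ∀ w ∈ Vm V x0 (m'-1), dotR c w ≤ dotR c (x j) := by
        intro w hw
        have hloc : ∀ z, Adjacent (convexHull ℝ ((Vm V x0 (m'-1) : Finset (Fin n → ℝ)) :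
            Set (Fin n → ℝ))) (x j) z → dotR c z ≤ dotR c (x j) := by
          intro z hzadj
          by_contra hgt
          push_neg at hgt
          have hzP : Adjacent P (x j) z := adjacent_lift (hVmEx (m'-1)) hzadj
          have h2 := hstep2 z ⟨hzP, hgt⟩
          have hzVm : z ∈ Vm V x0 (m'-1) := by
            exact_mod_cast extremePoints_convexHull_subset hzadj.2.1
          have := lastIdx_le_of_mem_Vm hzVm
          omega
        exact local_global _ c (x j) hxjExtB hloc w (subset_convexHull ℝ _ hw)
      -- Step B
      obtain ⟨wM, hwMVm, hwMmax⟩ :=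
        Finset.exists_max_image (Vm V x0 m') (dotR c) ⟨x (j+1), hxj1Vm⟩
      by_cases hMle : dotR c wM ≤ dotR c (x (j+1))
      · have h1 : dotR c u ≤ dotR c wM := hwMmax u huVm
        have h2 := hu.2
        linarith
      · push_neg at hMle
        have hcxj : dotR c (x j) < dotR c (x (j+1)) := hstep1.2
        set lam : ℝ := dotR c wM - dotR c (x j) with hlam
        have hlampos : 0 < lam := by rw [hlam]; linarith
        set sig : ℝ := 1 - 2 * x0 jst with hsig
        set gψ : Fin n → ℝ := c - (lam * sig) • (Pi.single jst 1 : Fin n → ℝ) with hgψ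
        have hdψ : ∀ v : Fin n → ℝ, dotR gψ v = dotR c v - lam * sig * v jst := by
          intro v; rw [hgψ, dotR_sub_left, dotR_smul_left, dotR_single, mul_assoc]
        have hxjbot : x j jst = x0 jst := (mem_Vm_iff.1 hxjVm1).2 jst (by omega)
        have hbot : ∀ w ∈ Vm V x0 m', w jst = x0 jst → w ∈ Vm V x0 (m'-1) := by
          intro w hw hwb
          refine mem_Vm_iff.2 ⟨(mem_Vm_iff.1 hw).1, fun j' hj' => ?_⟩
          by_cases hj'eq : (j' : ℕ) = m' - 1
          · have hj'j : j' = jst := Fin.ext (by omega)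
            rw [hj'j]; exact hwb
          · exact (mem_Vm_iff.1 hw).2 j' (by omega)
        have hflip : ∀ w ∈ Vm V x0 m', w jst ≠ x0 jst →
            sig * w jst = sig * x0 jst + 1 := by
          intro w hw hne
          have hwj := hV01 w (mem_Vm_iff.1 hw).1 jst
          have hx0j := hV01 x0 hx0V jst
          rcases hx0j with h0 | h0 <;> rcases hwj with h1 | h1
          · exact absurd (h1.trans h0.symm) hne
          · rw [hsig, h0, h1]; norm_num
          · rw [hsig, h0, h1]; norm_num
          · exact absurd (h1.trans h0.symm) hne
        have hψbound : ∀ w ∈ Vm V x0 m', dotR gψ w ≤ dotR gψ (x j) := by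
          intro w hw
          rw [hdψ w, hdψ (x j), hxjbot]
          by_cases hwb : w jst = x0 jst
          · have h1 := hB w (hbot w hw hwb)
            rw [hwb]
            linarith
          · have hfl := hflip w hw hwb
            have heq : lam * (sig * w jst) = lam * (sig * x0 jst) + lam := by
              rw [hfl]; ring
            have h2 : dotR c w ≤ dotR c wM := hwMmax w hw
            rw [mul_assoc, mul_assoc, heq]
            linarith
        set Wf := (Vm V x0 m').filter (fun w => dotR gψ w = dotR gψ (x j)) with hWfdef
        have hface := face_hull_eq (Vm V x0 m') gψ (dotR gψ (x j)) hψbound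
        have hFex : IsExtreme ℝ P (convexHull ℝ ((Wf : Finset (Fin n → ℝ)) :
            Set (Fin n → ℝ))) := by
          refine (hVmEx m').trans ?_
          rw [hWfdef, ← hface]
          exact isExtreme_face _ gψ _ hψbound
        have hxjWf : x j ∈ Wf := by rw [hWfdef]; exact Finset.mem_filter.2 ⟨hxjVm, rfl⟩
        have hwMtop : wM jst ≠ x0 jst := by
          intro hb
          have := hB wM (hbot wM hwMVm hb)
          linarith
        have hwMWf : wM ∈ Wf := by
          rw [hWfdef]
          refine Finset.mem_filter.2 ⟨hwMVm, ?_⟩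
          have hfl := hflip wM hwMVm hwMtop
          rw [hdψ wM, hdψ (x j), hxjbot]
          have heq : lam * (sig * wM jst) = lam * (sig * x0 jst) + lam := by
            rw [hfl]; ring
          rw [mul_assoc, mul_assoc, heq]
          rw [hlam]
          ring
        have hxjExtF : x j ∈ (convexHull ℝ ((Wf : Finset (Fin n → ℝ)) :
            Set (Fin n → ℝ))).extremePoints ℝ :=
          inter_extremePoints_subset_extremePoints_of_subset hFex.1
            ⟨subset_convexHull ℝ _ hxjWf, hvj⟩
        have hzex : ∃ z, Adjacent (convexHull ℝ ((Wf : Finset (Fin n → ℝ)) :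
            Set (Fin n → ℝ))) (x j) z ∧ dotR c (x j) < dotR c z := by
          by_contra hno
          push_neg at hno
          have := local_global Wf c (x j) hxjExtF (fun z hz => hno z hz) wM
            (subset_convexHull ℝ _ hwMWf)
          linarith
        obtain ⟨z, hzadj, hzimp⟩ := hzex
        have hzWf : z ∈ Wf := by
          exact_mod_cast extremePoints_convexHull_subset hzadj.2.1
        have hzWf' : z ∈ (Vm V x0 m').filter (fun w => dotR gψ w = dotR gψ (x j)) := by
          rw [← hWfdef]; exact hzWf
        obtain ⟨hzVm, hzψ⟩ := Finset.mem_filter.1 hzWf'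
        have hztop : z jst ≠ x0 jst := by
          intro hzb
          rw [hdψ z, hdψ (x j), hxjbot, hzb] at hzψ
          linarith
        have hzM : dotR c z = dotR c wM := by
          have hfl := hflip z hzVm hztop
          rw [hdψ z, hdψ (x j), hxjbot] at hzψ
          have heq : lam * (sig * z jst) = lam * (sig * x0 jst) + lam := by
            rw [hfl]; ring
          rw [mul_assoc, mul_assoc, heq] at hzψ
          rw [hlam] at hzψ
          linarith
        have hzlast : lastIdx x0 z = m' := by
          have h1 := lastIdx_le_of_mem_Vm hzVm
          have h2 := le_lastIdx hztop
          omega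
        have hzP : Adjacent P (x j) z := adjacent_lift hFex hzadj
        have hzle := hstep3 z ⟨hzP, hzimp⟩ (by rw [hzlast])
        linarith
  -- lastIdx is strictly increasing along the path
  have hmono : ∀ i, i < k → lastIdx x0 (x i) < lastIdx x0 (x (i+1)) :=
    fun i hi => key i (by omega) _ (hstep i hi).1
  have hmole : ∀ b, b ≤ k → ∀ a, a ≤ b → lastIdx x0 (x a) ≤ lastIdx x0 (x b) := by
    intro b
    induction b with
    | zero => intro _ a ha; rw [Nat.le_zero.1 ha]
    | succ b ihb =>
      intro hbk a ha
      rcases Nat.eq_or_lt_of_le ha with h | hlt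
      · rw [h]
      · exact le_trans (ihb (by omega) a (by omega)) (hmono b (by omega)).le
  -- the difference vectors lie in the direction space
  have hmemD : ∀ i : Fin k, x ((i:ℕ)+1) - x (i:ℕ) ∈ (affineSpan ℝ P).direction := by
    intro i
    have hik := i.isLt
    have h1 : x ((i:ℕ)+1) ∈ P := (hvert _ (by omega)).1
    have h2 : x (i:ℕ) ∈ P := (hvert _ (by omega)).1
    have := AffineSubspace.vsub_mem_direction
      (subset_affineSpan ℝ P h1) (subset_affineSpan ℝ P h2)
    simpa using this
  have hApos : ∀ i : Fin k, 0 < lastIdx x0 (x ((i:ℕ)+1)) := by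
    intro i
    have h := hmono (i:ℕ) i.isLt
    omega
  have hAn : ∀ i : Fin k, lastIdx x0 (x ((i:ℕ)+1)) ≤ n := fun i => lastIdx_le_n _ _
  have hjex : ∀ i : Fin k, ∃ jst : Fin n, (jst : ℕ) + 1 = lastIdx x0 (x ((i:ℕ)+1)) := by
    intro i
    have h1 := hApos i
    have h2 := hAn i
    exact ⟨⟨lastIdx x0 (x ((i:ℕ)+1)) - 1, by omega⟩, by simp; omega⟩
  choose jidx hjidx using hjex
  have hdiag : ∀ i : Fin k, (x ((i:ℕ)+1) - x (i:ℕ)) (jidx i) ≠ 0 := by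
    intro i
    obtain ⟨j', hj'ne, hj'eq⟩ := lastIdx_attained (hApos i)
    have hj'j : j' = jidx i := Fin.ext (by have := hjidx i; omega)
    have hne1 : x ((i:ℕ)+1) (jidx i) ≠ x0 (jidx i) := hj'j ▸ hj'ne
    have heq2 : x (i:ℕ) (jidx i) = x0 (jidx i) := by
      by_contra hne2
      have h3 := le_lastIdx hne2
      have h4 := hmono (i:ℕ) i.isLt
      have h5 := hjidx i
      omega
    simp only [Pi.sub_apply, heq2]
    exact sub_ne_zero.2 hne1
  have hlow : ∀ i l : Fin k, (l:ℕ) < (i:ℕ) → (x ((l:ℕ)+1) - x (l:ℕ)) (jidx i) = 0 := by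
    intro i l hli
    have hik := i.isLt
    have hjin := hjidx i
    have hL1 : lastIdx x0 (x ((l:ℕ)+1)) ≤ lastIdx x0 (x (i:ℕ)) :=
      hmole (i:ℕ) (by omega) ((l:ℕ)+1) (by omega)
    have hL2 : lastIdx x0 (x (l:ℕ)) ≤ lastIdx x0 (x (i:ℕ)) :=
      hmole (i:ℕ) (by omega) (l:ℕ) (by omega)
    have hLi : lastIdx x0 (x (i:ℕ)) < lastIdx x0 (x ((i:ℕ)+1)) := hmono (i:ℕ) i.isLt
    have h1 : x ((l:ℕ)+1) (jidx i) = x0 (jidx i) := by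
      by_contra hc
      have := le_lastIdx hc
      omega
    have h2 : x (l:ℕ) (jidx i) = x0 (jidx i) := by
      by_contra hc
      have := le_lastIdx hc
      omega
    simp [h1, h2]
  have hli : LinearIndependent ℝ (fun i : Fin k => x ((i:ℕ)+1) - x (i:ℕ)) := by
    rw [Fintype.linearIndependent_iff]
    intro gc hsum
    by_contra hne
    push_neg at hne
    obtain ⟨i1, hi1⟩ := hne
    have hsns : (Finset.univ.filter fun i : Fin k => gc i ≠ 0).Nonempty :=
      ⟨i1, Finset.mem_filter.2 ⟨Finset.mem_univ _, hi1⟩⟩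
    obtain ⟨i0, hi0mem, hi0max⟩ :=
      Finset.exists_max_image _ (fun i : Fin k => (i:ℕ)) hsns
    have hi0ne : gc i0 ≠ 0 := (Finset.mem_filter.1 hi0mem).2
    have happ := congrFun hsum (jidx i0)
    rw [Finset.sum_apply] at happ
    simp only [Pi.smul_apply, smul_eq_mul, Pi.zero_apply] at happ
    have hsingle : ∑ i : Fin k, gc i * ((x ((i:ℕ)+1) - x (i:ℕ)) (jidx i0))
        = gc i0 * ((x ((i0:ℕ)+1) - x (i0:ℕ)) (jidx i0)) := by
      apply Finset.sum_eq_single i0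
      · intro b _ hbne
        rcases Nat.lt_or_ge (b:ℕ) (i0:ℕ) with hlt | hge
        · rw [hlow i0 b hlt, mul_zero]
        · have hbz : gc b = 0 := by
            by_contra hbz
            have hmem : b ∈ Finset.univ.filter fun i : Fin k => gc i ≠ 0 :=
              Finset.mem_filter.2 ⟨Finset.mem_univ _, hbz⟩
            have hle' := hi0max b hmem
            exact hbne (Fin.ext (by omega))
          rw [hbz, zero_mul]
      · intro h; exact absurd (Finset.mem_univ i0) h
    rw [hsingle] at happ
    rcases mul_eq_zero.1 happ with h | h
    · exact hi0ne h
    · exact hdiag i0 h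
  have hliS : LinearIndependent ℝ (fun i : Fin k =>
      (⟨x ((i:ℕ)+1) - x (i:ℕ), hmemD i⟩ : (affineSpan ℝ P).direction)) := by
    apply LinearIndependent.of_comp ((affineSpan ℝ P).direction).subtype
    exact hli
  have hcard := hliS.fintype_card_le_finrank
  rw [Fintype.card_fin, hd] at hcard
  exact hcard
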